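/- For every k ≥ 2: p_k(a) = 0 for every a ∈ A_{<k}, and p_k(a) = 1 for every a ∈ A_{<k+1} \ A_{<k} (i.e. for every element of A of degree exactly k). In particular e_k(w) divides p_k(w) in K[w] and p_k(t_k) = 1. -/

import Mathlib

noncomputable section

open Polynomial
open scoped Classical
set_option linter.unusedSectionVars false

/-- The defining polynomial `Y² + Y + (X³ + X + 1)` over `𝔽₂[X]`,
viewed as a polynomial in `Y` with coefficients in `𝔽₂[X]`. -/
def curveEq : Polynomial (Polynomial (ZMod 2)) :=
  X ^ 2 + X + C (X ^ 3 + X + 1)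

/-- The ring `A = 𝔽₂[X,Y]/(Y² + Y + X³ + X + 1)`. -/
abbrev A : Type := AdjoinRoot curveEq

/-- The image `x` of `X` in `A`. -/
def aX : A := AdjoinRoot.of curveEq (X : Polynomial (ZMod 2))

/-- The image `y` of `Y` in `A`. -/
def aY : A := AdjoinRoot.root curveEq

/-- The bracket `[j]_x = x^{2^j} + x ∈ A`. -/
def brX (j : ℕ) : A := aX ^ 2 ^ j + aX

-- char 2 in A
lemma h2A : (2 : A) = 0 := by
  have h2 : (2 : Polynomial (ZMod 2)) = 0 := by
    have h3 : ((2:ℕ) : Polynomial (ZMod 2)) = C ((2:ℕ) : ZMod 2) := (Polynomial.C_eq_natCast _).symm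
    have h4 : ((2:ℕ) : ZMod 2) = 0 := by decide
    rw [h4, map_zero] at h3
    exact_mod_cast h3
  rw [show (2:A) = AdjoinRoot.of curveEq 2 from (map_ofNat _ 2).symm, h2, map_zero]

-- the curve relation
lemma relA : aY ^ 2 + aY + (aX ^ 3 + aX + 1) = 0 := by
  have h : eval₂ (AdjoinRoot.of curveEq) (AdjoinRoot.root curveEq)
      (X ^ 2 + X + C (X ^ 3 + X + 1)) = 0 := AdjoinRoot.eval₂_root curveEq
  simpa [aY, aX, eval₂_add, eval₂_pow, eval₂_X, eval₂_C, map_add, map_pow, map_one]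
    using h

lemma relA' : aY ^ 2 = aY + (aX ^ 3 + aX + 1) := by
  linear_combination relA + (-(aY + aX ^ 3 + aX + 1)) * h2A

-- target field for detecting nonvanishing
abbrev Ffld : Type := AlgebraicClosure (FractionRing (Polynomial (ZMod 2)))

def phiF : Polynomial (ZMod 2) →+* Ffld :=
  (algebraMap (FractionRing (Polynomial (ZMod 2))) Ffld).comp
    (algebraMap (Polynomial (ZMod 2)) (FractionRing (Polynomial (ZMod 2))))

lemma phiF_inj : Function.Injective phiF := by
  unfold phiF
  rw [RingHom.coe_comp]
  exact (RingHom.injective (algebraMap (FractionRing (Polynomial (ZMod 2))) Ffld)).comp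
    (IsFractionRing.injective (Polynomial (ZMod 2)) (FractionRing (Polynomial (ZMod 2))))

lemma exists_rootF : ∃ z : Ffld, eval₂ phiF z curveEq = 0 := by
  set q : Ffld := phiF (X ^ 3 + X + 1) with hq
  obtain ⟨z, hz⟩ := IsAlgClosed.exists_root (X ^ 2 + X + C q) (by
    have h1 : (X ^ 2 + (X + C q) : Polynomial Ffld).degree = 2 := by
      rw [degree_add_eq_left_of_degree_lt]
      · exact degree_X_pow 2
      · rw [degree_X_pow]
        exact lt_of_le_of_lt (degree_X_add_C _).le (by norm_num)
    rw [add_assoc] at *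
    rw [h1]
    norm_num)
  refine ⟨z, ?_⟩
  unfold curveEq
  simp only [eval₂_add, eval₂_pow, eval₂_X, eval₂_C]
  have := hz
  simp only [IsRoot, eval_add, eval_pow, eval_X, eval_C] at this
  rw [add_assoc] at this ⊢
  exact this

def sigmaF : A →+* Ffld := AdjoinRoot.lift phiF (Classical.choose exists_rootF)
  (Classical.choose_spec exists_rootF)

lemma sigmaF_aX : sigmaF aX = phiF X := AdjoinRoot.lift_of _

lemma Xpow_ne (n : ℕ) (hn : 1 ≤ n) : (X : Polynomial (ZMod 2)) ^ 2 ^ n + X ≠ 0 := by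
  intro h
  have hx : (X : Polynomial (ZMod 2)) ^ 2 ^ n = -X := by
    rwa [add_eq_zero_iff_eq_neg] at h
  have := congrArg natDegree hx
  rw [natDegree_X_pow, natDegree_neg, natDegree_X] at this
  have : 2 ≤ 2 ^ n := Nat.one_lt_two_pow (by omega)
  omega

lemma brX_ne (n : ℕ) (hn : 1 ≤ n) : brX n ≠ 0 := by
  intro h
  have : sigmaF (brX n) = 0 := by rw [h, map_zero]
  rw [brX, map_add, map_pow, sigmaF_aX, ← map_pow, ← map_add] at this
  exact Xpow_ne n hn (phiF_inj (by rwa [map_zero]))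


section Tw
variable {K : Type} [Field K]

lemma sq_add (h2 : (2:K) = 0) (a b : K) : (a + b)^2 = a^2 + b^2 := by
  linear_combination (a*b) * h2

lemma pow2_add (h2 : (2:K) = 0) (i : ℕ) (a b : K) :
    (a + b) ^ 2 ^ i = a ^ 2 ^ i + b ^ 2 ^ i := by
  induction i with
  | zero => simp
  | succ n ih =>
      have : (2:ℕ) ^ (n+1) = 2 ^ n * 2 := by ring
      rw [this, pow_mul, pow_mul, pow_mul, ih, sq_add h2]

lemma pow2_sum (h2 : (2:K) = 0) (i : ℕ) {ι : Type*} (s : Finset ι) (f : ι → K) :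
    (∑ x ∈ s, f x) ^ 2 ^ i = ∑ x ∈ s, (f x) ^ 2 ^ i := by
  induction s using Finset.cons_induction with
  | empty => simp [zero_pow (show (2:ℕ)^i ≠ 0 by positivity)]
  | cons a s ha ih =>
      rw [Finset.sum_cons, Finset.sum_cons, pow2_add h2, ih]

/-- twisted multiplication of coefficient sequences (τ f = f² τ, char 2) -/
def tmul (f g : ℕ → K) : ℕ → K := fun n => ∑ i ∈ Finset.range (n+1), f i * (g (n-i))^(2^i)

def iota (c : K) : ℕ → K := fun n => if n = 0 then c else 0

lemma tmul_apply (f g : ℕ → K) (n : ℕ) :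
    tmul f g n = ∑ i ∈ Finset.range (n+1), f i * (g (n-i))^(2^i) := rfl

lemma tmul_apply_zero (f g : ℕ → K) : tmul f g 0 = f 0 * g 0 := by
  simp [tmul]

lemma tmul_apply_one (f g : ℕ → K) : tmul f g 1 = f 0 * g 1 + f 1 * g 0 ^ 2 := by
  rw [tmul_apply]
  rw [Finset.sum_range_succ, Finset.sum_range_one]
  norm_num

lemma tmul_apply_two (f g : ℕ → K) :
    tmul f g 2 = f 0 * g 2 + f 1 * g 1 ^ 2 + f 2 * g 0 ^ 4 := by
  rw [tmul_apply]
  rw [Finset.sum_range_succ, Finset.sum_range_succ, Finset.sum_range_one]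
  norm_num

lemma tmul_iota_left (c : K) (f : ℕ → K) : tmul (iota c) f = fun n => c * f n := by
  funext n
  rw [tmul_apply]
  rw [Finset.sum_eq_single 0]
  · simp [iota]
  · intro i _ hi; simp [iota, hi]
  · intro h; simp at h

lemma tmul_iota_right (c : K) (f : ℕ → K) : tmul f (iota c) = fun n => f n * c^(2^n) := by
  funext n
  rw [tmul_apply]
  rw [Finset.sum_eq_single n]
  · simp [iota]
  · intro i hi hine
    have : n - i ≠ 0 := by simp [Finset.mem_range] at hi; omega
    simp [iota, this]
  · intro h; simp at h

lemma iota_tmul (c d : K) : tmul (iota c) (iota d) = iota (c * d) := by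
  rw [tmul_iota_left]
  funext n
  simp [iota, mul_ite]

lemma tmul_tone (f : ℕ → K) : tmul f (iota 1) = f := by
  rw [tmul_iota_right]; simp

lemma tone_tmul (f : ℕ → K) : tmul (iota 1) f = f := by
  rw [tmul_iota_left]; simp

lemma tmul_assoc (h2 : (2:K) = 0) (f g h : ℕ → K) :
    tmul (tmul f g) h = tmul f (tmul g h) := by
  funext n
  rw [tmul_apply, tmul_apply]
  have lhs : ∑ m ∈ Finset.range (n+1), tmul f g m * (h (n-m))^(2^m)
      = ∑ m ∈ Finset.range (n+1), ∑ i ∈ Finset.range (m+1),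
          f i * (g (m-i))^(2^i) * (h (n-m))^(2^m) := by
    refine Finset.sum_congr rfl fun m _ => ?_
    rw [tmul_apply, Finset.sum_mul]
  have rhs : ∑ i ∈ Finset.range (n+1), f i * (tmul g h (n-i))^(2^i)
      = ∑ i ∈ Finset.range (n+1), ∑ j ∈ Finset.range (n-i+1),
          f i * ((g j)^(2^i) * (h (n-i-j))^(2^(i+j))) := by
    refine Finset.sum_congr rfl fun i _ => ?_
    rw [tmul_apply, pow2_sum h2, Finset.mul_sum]
    refine Finset.sum_congr rfl fun j _ => ?_
    rw [mul_pow, ← pow_mul, ← pow_add, Nat.add_comm j i]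
  rw [lhs, rhs]
  rw [Finset.sum_sigma', Finset.sum_sigma']
  refine Finset.sum_nbij' (fun p => ⟨p.2, p.1 - p.2⟩) (fun p => ⟨p.1 + p.2, p.1⟩) ?_ ?_ ?_ ?_ ?_
  · rintro ⟨m, i⟩ hp
    simp only [Finset.mem_sigma, Finset.mem_range] at hp ⊢
    omega
  · rintro ⟨i, j⟩ hp
    simp only [Finset.mem_sigma, Finset.mem_range] at hp ⊢
    omega
  · rintro ⟨m, i⟩ hp
    simp only [Finset.mem_sigma, Finset.mem_range] at hp
    have e1 : i + (m - i) = m := by omega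
    simp [e1]
  · rintro ⟨i, j⟩ hp
    simp only [Finset.mem_sigma, Finset.mem_range] at hp
    have e1 : i + j - i = j := by omega
    simp [e1]
  · rintro ⟨m, i⟩ hp
    simp only [Finset.mem_sigma, Finset.mem_range] at hp
    have e1 : i + (m - i) = m := by omega
    dsimp only
    rw [e1, show n - i - (m - i) = n - m by omega]
    ring

lemma tmul_support_left (f g : ℕ → K) (n : ℕ) (hf : ∀ m, 2 < m → f m = 0) (hn : 2 ≤ n) :
    tmul f g n = f 0 * g n + f 1 * (g (n-1))^2 + f 2 * (g (n-2))^4 := by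
  rw [tmul_apply]
  rw [← Finset.sum_subset (show ({0, 1, 2} : Finset ℕ) ⊆ Finset.range (n+1) by
        intro i hi; simp at hi; simp [Finset.mem_range]; omega)
      (fun i hi hni => by
        have : 2 < i := by simp at hni ⊢; omega
        simp [hf i this])]
  rw [show ({0,1,2} : Finset ℕ) = insert 0 (insert 1 {2}) from rfl]
  rw [Finset.sum_insert (by decide), Finset.sum_insert (by decide), Finset.sum_singleton]
  norm_num
  ring

lemma tmul_support_right (f g : ℕ → K) (n : ℕ) (hg : ∀ m, 2 < m → g m = 0) (hn : 2 ≤ n) :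
    tmul f g n = f (n-2) * (g 2)^(2^(n-2)) + f (n-1) * (g 1)^(2^(n-1)) + f n * (g 0)^(2^n) := by
  rw [tmul_apply]
  rw [← Finset.sum_subset (show ({n-2, n-1, n} : Finset ℕ) ⊆ Finset.range (n+1) by
        intro i hi; simp at hi; simp [Finset.mem_range]; omega)
      (fun i hi hni => by
        have hii : i < n - 2 := by
          simp [Finset.mem_range] at hi
          simp at hni
          omega
        have : 2 < n - i := by omega
        simp [hg _ this])]
  rw [Finset.sum_insert (by simp; omega), Finset.sum_insert (by simp; omega),
    Finset.sum_singleton]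
  rw [show n - (n-2) = 2 by omega, show n - (n-1) = 1 by omega, Nat.sub_self]
  ring

end Tw

/-- The monomials `xⁱyʲ` with `j ∈ {0,1}` and `2i + 3j < k`. -/
def monoSet (k : ℕ) : Finset A :=
  ((Finset.range k ×ˢ Finset.range 2).filter fun p => 2 * p.1 + 3 * p.2 < k).image
    fun p => aX ^ p.1 * aY ^ p.2

/-- `A_{<k}` : the `𝔽₂`-linear span of the monomials `xⁱyʲ` with `j ∈ {0,1}`
and `2i + 3j < k`, realized as the finite set of all subset sums. -/
def Alt (k : ℕ) : Finset A := (monoSet k).powerset.image fun s => s.sum id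

/-- `t_k := x^{k/2}` if `k` is even, `t_k := y·x^{(k-3)/2}` if `k` is odd. -/
def tk (k : ℕ) : A := if Even k then aX ^ (k / 2) else aY * aX ^ ((k - 3) / 2)

/-- `e_k(w) := ∏_{a ∈ A_{<k}} (w + a) ∈ A[w]`. -/
def ePoly (k : ℕ) : Polynomial A := ∏ a ∈ Alt k, (X + C a)

/-- `D_k := e_k(t_k)`, the product of all monic elements of `A` of degree `k`. -/
def Dk (k : ℕ) : A := (ePoly k).eval (tk k)

variable (K : Type) [Field K] [Algebra A K]

/-- The coefficients `a_j = 1/d_j` of the exponential function: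
`a₀ = a₁ = 1` and `a_j = ([1]_x·a_{j-1}² + a_{j-2}⁴)/[j]_x` for `j ≥ 2`. -/
def aSeq : ℕ → K
  | 0 => 1
  | 1 => 1
  | (j + 2) =>
      (algebraMap A K (brX 1) * (aSeq (j + 1)) ^ 2 + (aSeq j) ^ 4) /
        algebraMap A K (brX (j + 2))

/-- The coefficients `b_j = 1/ℓ_j` of the logarithm function:
`b₀ = b₁ = 1` and `b_j = ([1]_x^{2^{j-1}}·b_{j-1} + b_{j-2})/[j]_x` for `j ≥ 2`. -/
def bSeq : ℕ → K
  | 0 => 1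
  | 1 => 1
  | (j + 2) =>
      (algebraMap A K (brX 1) ^ 2 ^ (j + 1) * bSeq (j + 1) + bSeq j) /
        algebraMap A K (brX (j + 2))

/-- `p_k(w) := Σ_{j=0}^{k} a_j·b_{k-j}^{2^j}·w^{2^j} ∈ K[w]`. -/
def pPoly (k : ℕ) : Polynomial K :=
  ∑ j ∈ Finset.range (k + 1), C (aSeq K j * (bSeq K (k - j)) ^ 2 ^ j) * X ^ 2 ^ j

/-- `S_{n,r}(x₁,…,x_n) := Σ_{n ≥ i₁ > i₂ > … > i_r ≥ 1} ∏_{j=1}^{r}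
x_{i_j}^{2^{n-j+1-i_j}}`, with `S_{n,0} = 1` and `S_{n,r} = 0` for `r > n`. -/
def Ssum (R : Type*) [CommRing R] (n r : ℕ) (x : ℕ → R) : R :=
  ∑ f ∈ Finset.univ.filter
      (fun f : Fin r → Fin (n + 1) => StrictAnti f ∧ ∀ j, 1 ≤ (f j : ℕ)),
    ∏ j : Fin r, x (f j) ^ 2 ^ (n - (j : ℕ) - (f j : ℕ))

section Aux

def XK : K := algebraMap A K aX
def LK : K := algebraMap A K (brX 1)
def rhoX : ℕ → K := fun n => if n = 0 then XK K else if n = 1 then LK K else if n = 2 then 1 else 0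

variable [IsFractionRing A K]

lemma h2K : (2 : K) = 0 := by
  rw [show (2:K) = algebraMap A K 2 from (map_ofNat _ 2).symm, h2A, map_zero]

lemma phiK_inj : Function.Injective (algebraMap A K) := IsFractionRing.injective A K

lemma brK_ne (n : ℕ) (hn : 1 ≤ n) : algebraMap A K (brX n) ≠ 0 := by
  intro h
  exact brX_ne n hn (phiK_inj K (by rwa [map_zero]))

lemma brK_eq (n : ℕ) : algebraMap A K (brX n) = XK K ^ 2 ^ n + XK K := by
  rw [brX, map_add, map_pow, XK]

lemma LK_eq : LK K = XK K ^ 2 + XK K := by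
  rw [LK, brK_eq]; norm_num

lemma rhoX_support : ∀ m, 2 < m → rhoX K m = 0 := by
  intro m hm
  simp only [rhoX]
  rw [if_neg (by omega), if_neg (by omega), if_neg (by omega)]

lemma aSeq_rec (j : ℕ) :
    aSeq K (j+2) * algebraMap A K (brX (j+2)) = LK K * (aSeq K (j+1))^2 + (aSeq K j)^4 := by
  rw [show aSeq K (j+2) = (algebraMap A K (brX 1) * (aSeq K (j + 1)) ^ 2 + (aSeq K j) ^ 4) /
        algebraMap A K (brX (j + 2)) from rfl, ← LK]
  exact div_mul_cancel₀ _ (brK_ne K _ (by omega))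

lemma bSeq_rec (j : ℕ) :
    bSeq K (j+2) * algebraMap A K (brX (j+2)) = LK K ^ 2 ^ (j+1) * bSeq K (j+1) + bSeq K j := by
  rw [show bSeq K (j+2) = (algebraMap A K (brX 1) ^ 2 ^ (j + 1) * bSeq K (j + 1) + bSeq K j) /
        algebraMap A K (brX (j + 2)) from rfl, ← LK]
  exact div_mul_cancel₀ _ (brK_ne K _ (by omega))

lemma eq1 : tmul (aSeq K) (iota (XK K)) = tmul (rhoX K) (aSeq K) := by
  funext n
  rw [tmul_iota_right]
  match n with
  | 0 =>
      rw [tmul_apply_zero]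
      simp [rhoX, aSeq]
  | 1 =>
      rw [tmul_apply_one]
      simp only [rhoX, aSeq, if_true, if_neg one_ne_zero]
      norm_num
      rw [LK_eq]
      linear_combination (-(XK K)) * h2K K
  | (j+2) =>
      rw [tmul_support_left _ _ _ (rhoX_support K) (by omega)]
      have h := aSeq_rec K j
      rw [brK_eq] at h
      simp only [rhoX, if_true, if_neg (by omega : (j:ℕ)+2 ≠ 0), if_neg (by omega : (j:ℕ)+2 ≠ 1)]
      norm_num
      linear_combination h + (-(XK K * aSeq K (j+2))) * h2K K

lemma eq2 : tmul (iota (XK K)) (bSeq K) = tmul (bSeq K) (rhoX K) := by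
  funext n
  rw [tmul_iota_left]
  match n with
  | 0 =>
      rw [tmul_apply_zero]
      simp [rhoX, bSeq]
  | 1 =>
      rw [tmul_apply_one]
      simp only [rhoX, bSeq, if_true, if_neg one_ne_zero]
      norm_num
      rw [LK_eq]
      linear_combination (-(XK K ^ 2)) * h2K K
  | (j+2) =>
      rw [tmul_support_right _ _ _ (rhoX_support K) (by omega)]
      have h := bSeq_rec K j
      rw [brK_eq] at h
      simp only [rhoX, if_true, if_neg (by omega : (j:ℕ)+2 ≠ 0), if_neg (by omega : (j:ℕ)+2 ≠ 1)]
      norm_num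
      linear_combination h + (-(bSeq K (j+2) * XK K ^ 2 ^ (j+2))) * h2K K

lemma EL : tmul (aSeq K) (bSeq K) = iota 1 := by
  have comm : tmul (tmul (aSeq K) (bSeq K)) (rhoX K)
      = tmul (rhoX K) (tmul (aSeq K) (bSeq K)) := by
    rw [tmul_assoc (h2K K), ← eq2, ← tmul_assoc (h2K K), eq1, tmul_assoc (h2K K)]
  set u := tmul (aSeq K) (bSeq K) with hu
  have hu0 : u 0 = 1 := by rw [hu, tmul_apply_zero]; simp [aSeq, bSeq]
  have key : ∀ n, 1 ≤ n → u n = 0 := by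
    intro n
    induction n using Nat.strong_induction_on with
    | _ n ih =>
      intro hn
      have hB := brK_ne K n hn
      rw [brK_eq] at hB
      rcases (show n = 1 ∨ n = 2 ∨ 3 ≤ n by omega) with h1 | h2 | h3
      · subst h1
        have hEq := congrFun comm 1
        rw [tmul_apply_one, tmul_apply_one, hu0] at hEq
        simp only [rhoX, if_true, if_neg one_ne_zero] at hEq
        norm_num at hEq
        have : u 1 * (XK K ^ 2 ^ 1 + XK K) = 0 := by
          linear_combination hEq + (XK K * u 1) * h2K K
        exact (mul_eq_zero.mp this).resolve_right hB
      · subst h2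
        have hEq := congrFun comm 2
        rw [tmul_apply_two, tmul_apply_two, hu0, ih 1 (by omega) (by omega)] at hEq
        simp only [rhoX, if_true, if_neg one_ne_zero] at hEq
        norm_num at hEq
        have : u 2 * (XK K ^ 2 ^ 2 + XK K) = 0 := by
          linear_combination hEq + (XK K * u 2) * h2K K
        exact (mul_eq_zero.mp this).resolve_right hB
      · have hEq := congrFun comm n
        rw [tmul_support_right _ _ _ (rhoX_support K) (by omega),
          tmul_support_left _ _ _ (rhoX_support K) (by omega)] at hEq
        rw [ih (n-1) (by omega) (by omega), ih (n-2) (by omega) (by omega)] at hEq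
        simp only [rhoX, if_true, if_neg one_ne_zero] at hEq
        norm_num at hEq
        have : u n * (XK K ^ 2 ^ n + XK K) = 0 := by
          linear_combination hEq + (XK K * u n) * h2K K
        exact (mul_eq_zero.mp this).resolve_right hB
  funext n
  match n with
  | 0 => rw [hu0]; rfl
  | (m+1) => rw [key (m+1) (by omega)]; simp [iota]

lemma LEinv : tmul (bSeq K) (aSeq K) = iota 1 := by
  have comm : tmul (tmul (bSeq K) (aSeq K)) (iota (XK K))
      = tmul (iota (XK K)) (tmul (bSeq K) (aSeq K)) := by
    rw [tmul_assoc (h2K K), eq1, ← tmul_assoc (h2K K), ← eq2, tmul_assoc (h2K K)]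
  set v := tmul (bSeq K) (aSeq K) with hv
  have hv0 : v 0 = 1 := by rw [hv, tmul_apply_zero]; simp [aSeq, bSeq]
  funext n
  match n with
  | 0 => rw [hv0]; rfl
  | (m+1) =>
      have hEq := congrFun comm (m+1)
      rw [tmul_iota_right, tmul_iota_left] at hEq
      have hB := brK_ne K (m+1) (by omega)
      rw [brK_eq] at hB
      have : v (m+1) * (XK K ^ 2 ^ (m+1) + XK K) = 0 := by
        linear_combination hEq + (XK K * v (m+1)) * h2K K
      rw [(mul_eq_zero.mp this).resolve_right hB]
      simp [iota]

def rhoM (a : A) : ℕ → K := tmul (aSeq K) (tmul (iota (algebraMap A K a)) (bSeq K))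

lemma rho_zero (a : A) : rhoM K a 0 = algebraMap A K a := by
  rw [rhoM, tmul_apply_zero, tmul_apply_zero]
  simp [aSeq, bSeq, iota]

lemma rho_mul (a b : A) : rhoM K (a * b) = tmul (rhoM K a) (rhoM K b) := by
  have h2 := h2K K
  rw [rhoM, rhoM, rhoM]
  conv_rhs =>
    rw [tmul_assoc h2 (aSeq K) (tmul (iota (algebraMap A K a)) (bSeq K))]
    rw [tmul_assoc h2 (iota (algebraMap A K a)) (bSeq K)]
    rw [← tmul_assoc h2 (bSeq K) (aSeq K)]
    rw [LEinv, tone_tmul]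
    rw [← tmul_assoc h2 (iota (algebraMap A K a)) (iota (algebraMap A K b))]
    rw [iota_tmul, ← map_mul]

lemma rho_x : rhoM K aX = rhoX K := by
  rw [rhoM, ← XK, eq2, ← tmul_assoc (h2K K), EL, tone_tmul]

lemma rho_one : rhoM K 1 = iota 1 := by
  rw [rhoM, map_one, tone_tmul, EL]

lemma pEval (a : A) (k : ℕ) :
    (pPoly K k).eval (algebraMap A K a) = rhoM K a k := by
  rw [pPoly, eval_finset_sum, rhoM, tmul_iota_left, tmul_apply]
  refine Finset.sum_congr rfl fun j _ => ?_
  rw [eval_mul, eval_C, eval_pow, eval_X, mul_pow]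
  ring

def rA : A := aX ^ 3 + aX + 1
def lA : A := aX ^ 2 + aX

lemma comm_c : tmul (rhoM K aY) (rhoX K) = tmul (rhoX K) (rhoM K aY) := by
  rw [← rho_x, ← rho_mul, mul_comm, rho_mul]

lemma c_rec (n : ℕ) (hn : 2 ≤ n) :
    rhoM K aY n * (XK K ^ 2 ^ n + XK K)
      = LK K * (rhoM K aY (n-1))^2 + (rhoM K aY (n-2))^4
        + LK K ^ 2 ^ (n-1) * rhoM K aY (n-1) + rhoM K aY (n-2) := by
  have hEq := congrFun (comm_c K) n
  rw [tmul_support_right _ _ _ (rhoX_support K) hn,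
    tmul_support_left _ _ _ (rhoX_support K) hn] at hEq
  simp only [rhoX, if_true, if_neg one_ne_zero] at hEq
  norm_num at hEq
  linear_combination hEq + (XK K * rhoM K aY n - LK K ^ 2 ^ (n-1) * rhoM K aY (n-1)
    - rhoM K aY (n-2)) * h2K K

lemma c_one : rhoM K aY 1 = algebraMap A K rA := by
  have hEq := congrFun (comm_c K) 1
  rw [tmul_apply_one, tmul_apply_one] at hEq
  simp only [rhoX, if_true, if_neg one_ne_zero] at hEq
  rw [rho_zero] at hEq
  have relK : (algebraMap A K aY)^2 = algebraMap A K aY + algebraMap A K rA := by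
    rw [← map_pow, ← map_add]
    exact congrArg _ (by rw [rA]; exact relA')
  rw [LK_eq] at hEq
  have hcan : rhoM K aY 1 * (XK K ^ 2 + XK K) = algebraMap A K rA * (XK K ^ 2 + XK K) := by
    linear_combination hEq + (XK K ^ 2 + XK K) * relK
      + (XK K * rhoM K aY 1) * h2K K
  have hB : XK K ^ 2 + XK K ≠ 0 := by
    have := brK_ne K 1 le_rfl
    rwa [brK_eq, pow_one] at this
  exact mul_right_cancel₀ hB hcan

lemma idA2 : (aX * rA) * (aX^4 + aX) = lA * rA^2 + aY^4 + lA^2 * rA + aY := by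
  rw [rA, lA]
  linear_combination (-2 - aY - aY^2 - aX - aX^3) * relA'
    + (-1 - 2*aY - 2*aX - aX*aY - 2*aX^2 - 4*aX^3 - aX^3*aY - 4*aX^4 - 2*aX^5 - 2*aX^6 - aX^7) * h2A

lemma idA3 : aX^8 + aX = lA * (aX*rA)^2 + rA^4 + lA^4 * (aX*rA) + rA := by
  rw [rA, lA]
  linear_combination (-1 - 2*aX - 3*aX^2 - 5*aX^3 - 8*aX^4 - 8*aX^5 - 9*aX^6 - 13*aX^7
    - 9*aX^8 - 7*aX^9 - 6*aX^10 - 2*aX^11 - aX^12) * h2A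

lemma idA4 : (0:A) = lA + (aX*rA)^4 + lA^8 + aX*rA := by
  rw [rA, lA]
  linear_combination (-aX - aX^2 - aX^4 - 2*aX^5 - 3*aX^6 - 4*aX^7 - 7*aX^8 - 10*aX^9
    - 19*aX^10 - 34*aX^11 - 38*aX^12 - 30*aX^13 - 16*aX^14 - 4*aX^15 - aX^16) * h2A

lemma LK_map : LK K = algebraMap A K lA := by
  rw [LK, brX, lA, pow_one]

lemma c_two : rhoM K aY 2 = algebraMap A K (aX * rA) := by
  have h := c_rec K 2 le_rfl
  norm_num [c_one, rho_zero] at h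
  have hB : XK K ^ 4 + XK K ≠ 0 := by
    have := brK_ne K 2 (by omega)
    rw [brK_eq] at this
    norm_num at this
    exact this
  refine mul_right_cancel₀ hB ?_
  rw [h]
  conv_rhs => rw [XK, ← map_pow, ← map_add, ← map_mul, congrArg (algebraMap A K) idA2]
  simp only [map_add, map_mul, map_pow, ← LK_map]

lemma c_three : rhoM K aY 3 = 1 := by
  have h := c_rec K 3 (by omega)
  norm_num [c_two, c_one] at h
  have hB : XK K ^ 8 + XK K ≠ 0 := by
    have := brK_ne K 3 (by omega)
    rw [brK_eq] at this
    norm_num at this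
    exact this
  refine mul_right_cancel₀ hB ?_
  rw [h, one_mul]
  conv_rhs => rw [XK, ← map_pow, ← map_add, congrArg (algebraMap A K) idA3]
  simp only [map_add, map_mul, map_pow, ← LK_map]

lemma c_four : rhoM K aY 4 = 0 := by
  have h := c_rec K 4 (by omega)
  norm_num [c_three, c_two] at h
  have hB : XK K ^ 16 + XK K ≠ 0 := by
    have := brK_ne K 4 (by omega)
    rw [brK_eq] at this
    norm_num at this
    exact this
  have hz : rhoM K aY 4 * (XK K ^ 16 + XK K) = 0 := by
    rw [h]
    have hid := congrArg (algebraMap A K) idA4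
    rw [map_zero] at hid
    rw [hid]
    simp only [map_add, map_mul, map_pow, ← LK_map]
  exact (mul_eq_zero.mp hz).resolve_right hB

lemma c_ge4 : ∀ n, 4 ≤ n → rhoM K aY n = 0 := by
  intro n
  induction n using Nat.strong_induction_on with
  | _ n ih =>
    intro hn
    rcases (show n = 4 ∨ n = 5 ∨ 6 ≤ n by omega) with h4 | h5 | h6
    · subst h4; exact c_four K
    · subst h5
      have h := c_rec K 5 (by omega)
      norm_num [c_four, c_three] at h
      have hB : XK K ^ 32 + XK K ≠ 0 := by
        have := brK_ne K 5 (by omega)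
        rw [brK_eq] at this
        norm_num at this
        exact this
      have hz : rhoM K aY 5 * (XK K ^ 32 + XK K) = 0 := by
        rw [h]; exact h2K K
      exact (mul_eq_zero.mp hz).resolve_right hB
    · have h := c_rec K n (by omega)
      rw [ih (n-1) (by omega) (by omega), ih (n-2) (by omega) (by omega)] at h
      have hB : XK K ^ 2 ^ n + XK K ≠ 0 := by
        have := brK_ne K n (by omega); rwa [brK_eq] at this
      have hz : rhoM K aY n * (XK K ^ 2 ^ n + XK K) = 0 := by rw [h]; ring
      exact (mul_eq_zero.mp hz).resolve_right hB

/-- `f` is "monic of degree `d`" as a twisted series -/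
def MonoC (f : ℕ → K) (d : ℕ) : Prop := f d = 1 ∧ ∀ n, d < n → f n = 0

variable {K}

lemma mono_tmul {f g : ℕ → K} {d e : ℕ} (hf : MonoC K f d) (hg : MonoC K g e) :
    MonoC K (tmul f g) (d + e) := by
  constructor
  · rw [tmul_apply, Finset.sum_eq_single d]
    · rw [show d + e - d = e by omega, hf.1, hg.1, one_pow, one_mul]
    · intro i hi hne
      rcases lt_or_gt_of_ne hne with hlt | hgt
      · have : e < d + e - i := by omega
        rw [hg.2 _ this, zero_pow (show (2:ℕ)^i ≠ 0 by positivity), mul_zero]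
      · rw [hf.2 _ hgt, zero_mul]
    · intro h
      simp only [Finset.mem_range] at h
      exact absurd (by omega : d < d + e + 1) h
  · intro n hn
    rw [tmul_apply]
    refine Finset.sum_eq_zero fun i hi => ?_
    rcases le_or_gt i d with hle | hgt
    · have : e < n - i := by omega
      rw [hg.2 _ this, zero_pow (show (2:ℕ)^i ≠ 0 by positivity), mul_zero]
    · rw [hf.2 _ hgt, zero_mul]

lemma mono_one : MonoC K (iota 1) 0 := by
  constructor
  · rfl
  · intro n hn; simp only [iota, if_neg (by omega : ¬ n = 0)]

lemma mono_rhoX : MonoC K (rhoM K aX) 2 := by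
  rw [rho_x]
  exact ⟨rfl, fun n hn => rhoX_support K n hn⟩

lemma mono_rhoY : MonoC K (rhoM K aY) 3 :=
  ⟨c_three K, fun n hn => c_ge4 K n (by omega)⟩

lemma mono_rho_Xpow (i : ℕ) : MonoC K (rhoM K (aX ^ i)) (2 * i) := by
  induction i with
  | zero => simpa [pow_zero, rho_one] using (mono_one (K := K))
  | succ m ih =>
      rw [pow_succ, rho_mul, show 2 * (m + 1) = 2 * m + 2 by ring]
      exact mono_tmul ih (mono_rhoX (K := K))

lemma mono_rho_monomial (i j : ℕ) (hj : j < 2) :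
    MonoC K (rhoM K (aX ^ i * aY ^ j)) (2 * i + 3 * j) := by
  interval_cases j
  · simpa [mul_one] using mono_rho_Xpow (K := K) i
  · rw [pow_one, rho_mul]
    exact mono_tmul (mono_rho_Xpow i) mono_rhoY


variable (K)

lemma pEval_add (a b : A) (k : ℕ) :
    (pPoly K k).eval (algebraMap A K (a+b))
      = (pPoly K k).eval (algebraMap A K a) + (pPoly K k).eval (algebraMap A K b) := by
  rw [map_add, pPoly, eval_finset_sum, eval_finset_sum, eval_finset_sum,
    ← Finset.sum_add_distrib]
  refine Finset.sum_congr rfl fun j _ => ?_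
  simp only [eval_mul, eval_C, eval_pow, eval_X]
  rw [pow2_add (h2K K), mul_add]

lemma pEval_zero (k : ℕ) : (pPoly K k).eval (algebraMap A K 0) = 0 := by
  rw [map_zero, pPoly, eval_finset_sum]
  refine Finset.sum_eq_zero fun j _ => ?_
  rw [eval_mul, eval_pow, eval_X, zero_pow (show (2:ℕ)^j ≠ 0 by positivity), mul_zero]

lemma pEval_sum (s : Finset A) (k : ℕ) :
    (pPoly K k).eval (algebraMap A K (s.sum id))
      = ∑ m ∈ s, (pPoly K k).eval (algebraMap A K m) := by
  induction s using Finset.cons_induction with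
  | empty => simpa using pEval_zero K k
  | cons a s ha ih =>
      rw [Finset.sum_cons, Finset.sum_cons, id_eq, pEval_add, ih]

lemma eval_monoSet {k : ℕ} {m : A} (hm : m ∈ monoSet k) :
    (pPoly K k).eval (algebraMap A K m) = 0 := by
  rw [monoSet, Finset.mem_image] at hm
  obtain ⟨p, hp, rfl⟩ := hm
  rw [Finset.mem_filter, Finset.mem_product, Finset.mem_range, Finset.mem_range] at hp
  obtain ⟨⟨hp1, hp2⟩, hdeg⟩ := hp
  rw [pEval]
  exact (mono_rho_monomial p.1 p.2 hp2).2 k hdeg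

lemma mem_monoSet_of {k : ℕ} (p : ℕ × ℕ) (h1 : p.2 < 2) (h2 : 2*p.1+3*p.2 < k) :
    aX ^ p.1 * aY ^ p.2 ∈ monoSet k := by
  rw [monoSet, Finset.mem_image]
  exact ⟨p, Finset.mem_filter.mpr ⟨Finset.mem_product.mpr
    ⟨Finset.mem_range.mpr (by omega), Finset.mem_range.mpr h1⟩, h2⟩, rfl⟩

lemma tk_eq {k : ℕ} (hk : 2 ≤ k) (p : ℕ × ℕ) (h1 : p.2 < 2) (h2 : 2*p.1+3*p.2 = k) :
    aX ^ p.1 * aY ^ p.2 = tk k := by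
  rcases Nat.even_or_odd k with he | ho
  · have hp2 : p.2 = 0 := by rcases he with ⟨t, ht⟩; omega
    have hp1 : p.1 = k / 2 := by omega
    rw [tk, if_pos he, hp2, hp1, pow_zero, mul_one]
  · have hp2 : p.2 = 1 := by rcases ho with ⟨t, ht⟩; omega
    have hp1 : p.1 = (k-3)/2 := by
      rcases ho with ⟨t, ht⟩; omega
    rw [tk, if_neg (by simpa using Nat.not_even_iff_odd.mpr ho), hp2, hp1, pow_one, mul_comm]

lemma eval_tk {k : ℕ} (hk : 2 ≤ k) :
    (pPoly K k).eval (algebraMap A K (tk k)) = 1 := by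
  rcases Nat.even_or_odd k with he | ho
  · rw [tk, if_pos he, pEval]
    have := (mono_rho_Xpow (K := K) (k/2)).1
    rwa [show 2 * (k/2) = k from by rcases he with ⟨t,ht⟩; omega] at this
  · rw [tk, if_neg (by simpa using Nat.not_even_iff_odd.mpr ho),
      show aY * aX ^ ((k-3)/2) = aX ^ ((k-3)/2) * aY ^ 1 from by ring, pEval]
    have := (mono_rho_monomial (K := K) ((k-3)/2) 1 (by omega)).1
    rwa [show 2*((k-3)/2) + 3*1 = k from by rcases ho with ⟨t,ht⟩; omega] at this


end Aux

/-- For `k ≥ 2`: `p_k(a) = 0` for every `a ∈ A_{<k}`, and `p_k(a) = 1` for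
every element of degree exactly `k` (i.e. `a ∈ A_{<k+1} \ A_{<k}`).  In
particular `e_k(w) ∣ p_k(w)` in `K[w]` and `p_k(t_k) = 1`. -/
theorem stmt8 [IsFractionRing A K] (k : ℕ) (hk : 2 ≤ k) :
    (∀ a ∈ Alt k, (pPoly K k).eval (algebraMap A K a) = 0) ∧
    (∀ a ∈ Alt (k + 1), a ∉ Alt k → (pPoly K k).eval (algebraMap A K a) = 1) ∧
    (ePoly k).map (algebraMap A K) ∣ pPoly K k ∧
    (pPoly K k).eval (algebraMap A K (tk k)) = 1 := by
  have part1 : ∀ a ∈ Alt k, (pPoly K k).eval (algebraMap A K a) = 0 := by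
    intro a ha
    rw [Alt, Finset.mem_image] at ha
    obtain ⟨s, hs, rfl⟩ := ha
    rw [Finset.mem_powerset] at hs
    rw [pEval_sum]
    exact Finset.sum_eq_zero fun m hm => eval_monoSet K (hs hm)
  refine ⟨part1, ?_, ?_, eval_tk K hk⟩
  · intro a ha hna
    rw [Alt, Finset.mem_image] at ha
    obtain ⟨s, hs, rfl⟩ := ha
    rw [Finset.mem_powerset] at hs
    by_cases htk : tk k ∈ s
    · rw [← Finset.sum_erase_add s id htk, id_eq, pEval_add, eval_tk K hk]
      have h0 : (pPoly K k).eval (algebraMap A K ((s.erase (tk k)).sum id)) = 0 := by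
        rw [pEval_sum]
        refine Finset.sum_eq_zero fun m hm => ?_
        obtain ⟨hne, hmem⟩ := Finset.mem_erase.mp hm
        have hm' := hs hmem
        rw [monoSet, Finset.mem_image] at hm'
        obtain ⟨p, hp, rfl⟩ := hm'
        rw [Finset.mem_filter, Finset.mem_product, Finset.mem_range, Finset.mem_range] at hp
        obtain ⟨⟨hp1, hp2⟩, hdeg⟩ := hp
        rcases (show 2*p.1+3*p.2 = k ∨ 2*p.1+3*p.2 < k by omega) with heq | hlt
        · exact absurd (tk_eq hk p hp2 heq) hne
        · exact eval_monoSet K (mem_monoSet_of p hp2 hlt)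
      rw [h0, zero_add]
    · exfalso
      apply hna
      rw [Alt, Finset.mem_image]
      refine ⟨s, Finset.mem_powerset.mpr ?_, rfl⟩
      intro m hm
      have hm' := hs hm
      rw [monoSet, Finset.mem_image] at hm'
      obtain ⟨p, hp, rfl⟩ := hm'
      rw [Finset.mem_filter, Finset.mem_product, Finset.mem_range, Finset.mem_range] at hp
      obtain ⟨⟨hp1, hp2⟩, hdeg⟩ := hp
      rcases (show 2*p.1+3*p.2 = k ∨ 2*p.1+3*p.2 < k by omega) with heq | hlt
      · exact absurd (tk_eq hk p hp2 heq ▸ hm) htk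
      · exact mem_monoSet_of p hp2 hlt
  · have neg_eq : ∀ c : K, -c = c := fun c => by linear_combination (-c) * h2K K
    rw [ePoly, Polynomial.map_prod]
    have hfac : ∀ a ∈ Alt k, (X + C a).map (algebraMap A K)
        = X - C (algebraMap A K a) := by
      intro a _
      rw [Polynomial.map_add, Polynomial.map_X, Polynomial.map_C, sub_eq_add_neg,
        ← C_neg, neg_eq]
    rw [Finset.prod_congr rfl hfac]
    refine Finset.prod_dvd_of_coprime ?_ ?_
    · intro a ha b hb hab
      exact Polynomial.isCoprime_X_sub_C_of_isUnit_sub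
        (Ne.isUnit (sub_ne_zero.mpr fun h => hab (phiK_inj K h)))
    · intro a ha
      exact Polynomial.dvd_iff_isRoot.mpr (part1 a ha)
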